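/- Let {F_t}_{t≥0} be a family of maps F_t : 𝔻₁ → 𝔻₁ with F_{t+s} = F_t ∘ F_s for all t,s ≥ 0 and lim_{t→0⁺} F_t(x) = x for each x ∈ 𝔻₁. Let Γ̂(F_t,·) : 𝔻₁ → L(Y) satisfy: (i) Γ̂(F_t, F_s(x)) ∘ Γ̂(F_s, x) = Γ̂(F_{t+s}, x) for all t,s ≥ 0 and x ∈ 𝔻₁; (ii) ‖Γ̂(F_t,x)‖_{L(Y)} ≤ p(‖F_t(x)‖)/p(‖x‖); (iii) lim_{t→0⁺} ‖Γ̂(F_t,x) − id_Y‖_{L(Y)} = 0 for each x. Let {G_t}_{t≥0} be maps G_t : 𝔻₂ → 𝔻₂ with G_{t+s} = G_t ∘ G_s, lim_{t→0⁺} G_t(y) = y, ‖G_t(y)‖ ≤ ‖y‖ for all y ∈ 𝔻₂, and G_s(Γ̂(F_t,x)y) = Γ̂(F_t,x)(G_s(y)) whenever y ∈ 𝔻₂ and Γ̂(F_t,x)y ∈ 𝔻₂. Then the family F̃_t(x,y) := (F_t(x), Γ̂(F_t,x)(G_t(y))) is a one-parameter semigroup on 𝔻: each F̃_t maps 𝔻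 into 𝔻, F̃_{t+s} = F̃_t ∘ F̃_s on 𝔻 for all t,s ≥ 0, and lim_{t→0⁺} F̃_t(x,y) = (x,y) for every (x,y) ∈ 𝔻. -/

import Mathlib

open Set Filter Topology

/-- Extension of semigroups (Theorem 4.1): if `{F_t}` is a one-parameter continuous
semigroup on `𝔻₁`, `Γ̂(F_t,·)` satisfies the chain rule, the norm bound
`‖Γ̂(F_t,x)‖ ≤ p ‖F_t x‖ / p ‖x‖` and tends to `id_Y` as `t → 0⁺`, and `{G_t}` is a
one-parameter continuous semigroup of norm-nonincreasing self-maps of `𝔻₂` commuting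
with the operators `Γ̂(F_t,x)`, then `F̃_t(x,y) = (F_t x, Γ̂(F_t,x)(G_t y))` is a
one-parameter continuous semigroup on `𝔻`. -/
theorem stmt_9 {X Y : Type*} [NormedAddCommGroup X] [NormedSpace ℂ X]
    [NormedAddCommGroup Y] [NormedSpace ℂ Y]
    (p : ℝ → ℝ)
    (hp_cont : ContinuousOn p (Icc 0 1))
    (hp_maps : ∀ s ∈ Icc (0:ℝ) 1, p s ∈ Icc (0:ℝ) 1)
    (hp0 : p 0 = 1) (hp1 : p 1 = 0)
    (hp_anti : StrictAntiOn p (Icc 0 1))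
    (D : Set (X × Y))
    (hD : D = {z : X × Y | ‖z.1‖ < 1 ∧ ‖z.2‖ < 1 ∧ ‖z.2‖ < p ‖z.1‖})
    (F : ℝ → X → X)
    (hF_maps : ∀ t : ℝ, 0 ≤ t → ∀ x : X, ‖x‖ < 1 → ‖F t x‖ < 1)
    (hF_sg : ∀ t s : ℝ, 0 ≤ t → 0 ≤ s → ∀ x : X, ‖x‖ < 1 →
      F (t + s) x = F t (F s x))
    (hF_cont : ∀ x : X, ‖x‖ < 1 →
      Tendsto (fun t => F t x) (𝓝[>] (0:ℝ)) (𝓝 x))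
    (Γ : ℝ → X → Y →L[ℂ] Y)
    (hΓ_chain : ∀ t s : ℝ, 0 ≤ t → 0 ≤ s → ∀ x : X, ‖x‖ < 1 →
      (Γ t (F s x)).comp (Γ s x) = Γ (t + s) x)
    (hΓ_bound : ∀ t : ℝ, 0 ≤ t → ∀ x : X, ‖x‖ < 1 →
      ‖Γ t x‖ ≤ p ‖F t x‖ / p ‖x‖)
    (hΓ_cont : ∀ x : X, ‖x‖ < 1 →
      Tendsto (fun t => Γ t x) (𝓝[>] (0:ℝ)) (𝓝 (ContinuousLinearMap.id ℂ Y)))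
    (G : ℝ → Y → Y)
    (hG_norm : ∀ t : ℝ, 0 ≤ t → ∀ y : Y, ‖y‖ < 1 → ‖G t y‖ ≤ ‖y‖)
    (hG_sg : ∀ t s : ℝ, 0 ≤ t → 0 ≤ s → ∀ y : Y, ‖y‖ < 1 →
      G (t + s) y = G t (G s y))
    (hG_cont : ∀ y : Y, ‖y‖ < 1 →
      Tendsto (fun t => G t y) (𝓝[>] (0:ℝ)) (𝓝 y))
    (hcomm : ∀ t s : ℝ, 0 ≤ t → 0 ≤ s → ∀ x : X, ‖x‖ < 1 → ∀ y : Y, ‖y‖ < 1 →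
      ‖Γ t x y‖ < 1 → G s (Γ t x y) = Γ t x (G s y))
    (Ftilde : ℝ → X × Y → X × Y)
    (hFt : ∀ (t : ℝ) (z : X × Y), Ftilde t z = (F t z.1, Γ t z.1 (G t z.2))) :
    (∀ t : ℝ, 0 ≤ t → MapsTo (Ftilde t) D D) ∧
    (∀ t s : ℝ, 0 ≤ t → 0 ≤ s → ∀ z ∈ D, Ftilde (t + s) z = Ftilde t (Ftilde s z)) ∧
    (∀ z ∈ D, Tendsto (fun t => Ftilde t z) (𝓝[>] (0:ℝ)) (𝓝 z)) := by

  have ppos : ∀ x : X, ‖x‖ < 1 → 0 < p ‖x‖ := by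
    intro x hx
    have h := hp_anti ⟨norm_nonneg x, hx.le⟩ ⟨zero_le_one, le_rfl⟩ hx
    rw [hp1] at h
    exact h
  have pFle1 : ∀ x : X, ‖x‖ < 1 → p ‖x‖ ≤ 1 := fun x hx =>
    (hp_maps _ ⟨norm_nonneg x, hx.le⟩).2
  have key : ∀ t : ℝ, 0 ≤ t → ∀ x : X, ‖x‖ < 1 → ∀ y : Y, ‖y‖ < 1 → ‖y‖ < p ‖x‖ →
      ‖Γ t x (G t y)‖ < p ‖F t x‖ := by
    intro t ht x hx y hy hyp
    have hFx := hF_maps t ht x hx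
    have hpx := ppos x hx
    have hpF := ppos _ hFx
    have h1 : ‖Γ t x (G t y)‖ ≤ ‖Γ t x‖ * ‖G t y‖ := (Γ t x).le_opNorm _
    have h2 : ‖Γ t x‖ * ‖G t y‖ ≤ (p ‖F t x‖ / p ‖x‖) * ‖y‖ :=
      mul_le_mul (hΓ_bound t ht x hx) (hG_norm t ht y hy) (norm_nonneg _)
        (le_of_lt (div_pos hpF hpx))
    have h3 : (p ‖F t x‖ / p ‖x‖) * ‖y‖ < (p ‖F t x‖ / p ‖x‖) * p ‖x‖ :=
      mul_lt_mul_of_pos_left hyp (div_pos hpF hpx)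
    have h4 : (p ‖F t x‖ / p ‖x‖) * p ‖x‖ = p ‖F t x‖ := div_mul_cancel₀ _ hpx.ne'
    linarith
  refine ⟨?_, ?_, ?_⟩
  · intro t ht z hz
    rw [hD] at hz ⊢
    obtain ⟨hx, hy, hyp⟩ := hz
    rw [hFt]
    have hk := key t ht z.1 hx z.2 hy hyp
    exact ⟨hF_maps t ht z.1 hx, lt_of_lt_of_le hk (pFle1 _ (hF_maps t ht z.1 hx)), hk⟩
  · intro t s ht hs z hz
    rw [hD] at hz
    obtain ⟨hx, hy, hyp⟩ := hz
    rw [hFt, hFt, hFt]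
    simp only
    have hGs : ‖G s z.2‖ < 1 := lt_of_le_of_lt (hG_norm s hs z.2 hy) hy
    have hΓGs : ‖Γ s z.1 (G s z.2)‖ < 1 :=
      lt_of_lt_of_le (key s hs z.1 hx z.2 hy hyp) (pFle1 _ (hF_maps s hs z.1 hx))
    have hc : G t (Γ s z.1 (G s z.2)) = Γ s z.1 (G t (G s z.2)) :=
      hcomm s t hs ht z.1 hx (G s z.2) hGs hΓGs
    refine Prod.ext (hF_sg t s ht hs z.1 hx) ?_
    simp only
    rw [hG_sg t s ht hs z.2 hy, ← hΓ_chain t s ht hs z.1 hx, hc]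
    rfl
  · intro z hz
    rw [hD] at hz
    obtain ⟨hx, hy, hyp⟩ := hz
    have hfun : (fun t => Ftilde t z) = fun t => (F t z.1, Γ t z.1 (G t z.2)) := by
      funext t; exact hFt t z
    rw [hfun]
    have h2 : Tendsto (fun t => Γ t z.1 (G t z.2)) (𝓝[>] (0:ℝ)) (𝓝 z.2) := by
      have hpair : Tendsto (fun t => ((Γ t z.1 : Y →L[ℂ] Y), G t z.2)) (𝓝[>] (0:ℝ))
          (𝓝 (ContinuousLinearMap.id ℂ Y, z.2)) :=
        (hΓ_cont z.1 hx).prodMk_nhds (hG_cont z.2 hy)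
      have happ : Continuous (fun q : (Y →L[ℂ] Y) × Y => q.1 q.2) :=
        isBoundedBilinearMap_apply.continuous
      have := (happ.tendsto (ContinuousLinearMap.id ℂ Y, z.2)).comp hpair
      simpa [Function.comp_def] using this
    have : Tendsto (fun t => (F t z.1, Γ t z.1 (G t z.2))) (𝓝[>] (0:ℝ)) (𝓝 (z.1, z.2)) :=
      (hF_cont z.1 hx).prodMk_nhds h2
    simpa using this
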